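/- Every proper retract of a free group of rank n has rank strictly smaller than n. -/

import Mathlib

/-- `R` is a retract of the ambient group: there is an endomorphism with image `R`
restricting to the identity on `R` (equivalently, an idempotent endomorphism with image `R`). -/
def IsRetract {G : Type*} [Group G] (R : Subgroup G) : Prop :=
  ∃ r : G →* G, r.range = R ∧ ∀ x ∈ R, r x = x

/-- The subgroup `H` is free of rank `m`. -/
def HasFreeRank {G : Type*} [Group G] (H : Subgroup G) (m : ℕ) : Prop :=
  ∃ φ : FreeGroup (Fin m) →* G, Function.Injective φ ∧ φ.range = H

open Function

namespace RFAux

variable {α : Type} [DecidableEq α]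

lemma no_cancel {w : FreeGroup α} {i : ℕ} {x : α} {b : Bool}
    (h1 : w.toWord[i]? = some (x, b)) (h2 : w.toWord[i + 1]? = some (x, !b)) : False := by
  obtain ⟨hi1, hx1⟩ := List.getElem?_eq_some_iff.mp h1
  obtain ⟨hi2, hx2⟩ := List.getElem?_eq_some_iff.mp h2
  have hd1 : w.toWord.drop i = (x, b) :: w.toWord.drop (i + 1) := by
    rw [List.drop_eq_getElem_cons hi1, hx1]
  have hd2 : w.toWord.drop (i + 1) = (x, !b) :: w.toWord.drop (i + 2) := by
    rw [List.drop_eq_getElem_cons hi2, hx2]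
  have hsplit : w.toWord = w.toWord.take i ++ (x, b) :: (x, !b) :: w.toWord.drop (i + 2) := by
    conv_lhs => rw [← List.take_append_drop i w.toWord]
    rw [hd1, hd2]
  have hred : FreeGroup.reduce (α := α) w.toWord
      = w.toWord.take i ++ (x, b) :: (x, !b) :: w.toWord.drop (i + 2) := by
    rw [FreeGroup.reduce_toWord]; exact hsplit
  exact FreeGroup.reduce.not hred

variable (w : FreeGroup α)

def pp (a : α) (j : Fin (w.toWord.length + 1)) : Prop :=
  ((j : ℕ) ≠ 0 ∧ w.toWord[(j : ℕ) - 1]? = some (a, true)) ∨ w.toWord[(j : ℕ)]? = some (a, false)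

def qq (a : α) (j : Fin (w.toWord.length + 1)) : Prop :=
  w.toWord[(j : ℕ)]? = some (a, true) ∨ ((j : ℕ) ≠ 0 ∧ w.toWord[(j : ℕ) - 1]? = some (a, false))

instance (a : α) : DecidablePred (pp w a) := fun _ => by unfold pp; infer_instance
instance (a : α) : DecidablePred (qq w a) := fun _ => by unfold qq; infer_instance

def fwd (a : α) (j : Fin (w.toWord.length + 1)) (hj : pp w a j) : {j' // qq w a j'} :=
  if h : (j : ℕ) ≠ 0 ∧ w.toWord[(j : ℕ) - 1]? = some (a, true) then
    ⟨⟨(j : ℕ) - 1, lt_of_le_of_lt (Nat.sub_le _ _) j.isLt⟩, Or.inl h.2⟩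
  else
    have h2 : w.toWord[(j : ℕ)]? = some (a, false) := hj.resolve_left h
    ⟨⟨(j : ℕ) + 1, by
        have := (List.getElem?_eq_some_iff.mp h2).1; omega⟩,
      Or.inr ⟨Nat.succ_ne_zero _, by simpa using h2⟩⟩

def bwd (a : α) (j : Fin (w.toWord.length + 1)) (hj : qq w a j) : {j' // pp w a j'} :=
  if h : w.toWord[(j : ℕ)]? = some (a, true) then
    ⟨⟨(j : ℕ) + 1, by
        have := (List.getElem?_eq_some_iff.mp h).1; omega⟩,
      Or.inl ⟨Nat.succ_ne_zero _, by simpa using h⟩⟩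
  else
    have h2 := hj.resolve_left h
    ⟨⟨(j : ℕ) - 1, lt_of_le_of_lt (Nat.sub_le _ _) j.isLt⟩, Or.inr h2.2⟩

def ee (a : α) : {j // pp w a j} ≃ {j // qq w a j} where
  toFun x := fwd w a x.1 x.2
  invFun x := bwd w a x.1 x.2
  left_inv := by
    rintro ⟨j, hj⟩
    by_cases h : (j : ℕ) ≠ 0 ∧ w.toWord[(j : ℕ) - 1]? = some (a, true)
    · simp only [fwd, dif_pos h, bwd, dif_pos h.2]
      apply Subtype.ext
      apply Fin.ext
      simp only []
      omega
    · have h2 : w.toWord[(j : ℕ)]? = some (a, false) := hj.resolve_left h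
      have hcond : ¬ (w.toWord[(j : ℕ) + 1]? = some (a, true)) := fun hc =>
        no_cancel h2 (by simpa using hc)
      simp only [fwd, dif_neg h, bwd, dif_neg hcond]
      apply Subtype.ext; apply Fin.ext
      simp
  right_inv := by
    rintro ⟨j, hj⟩
    by_cases h : w.toWord[(j : ℕ)]? = some (a, true)
    · have hcond : ((j : ℕ) + 1 : ℕ) ≠ 0 ∧ w.toWord[((j : ℕ) + 1) - 1]? = some (a, true) :=
        ⟨Nat.succ_ne_zero _, by simpa using h⟩
      simp only [bwd, dif_pos h, fwd, dif_pos hcond]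
      apply Subtype.ext; apply Fin.ext
      simp
    · have h2 := hj.resolve_left h
      have hcond : ¬ (((j : ℕ) - 1 : ℕ) ≠ 0 ∧ w.toWord[((j : ℕ) - 1) - 1]? = some (a, true)) := by
        rintro ⟨hne, hg⟩
        have heq : (j : ℕ) - 1 - 1 + 1 = (j : ℕ) - 1 := by omega
        exact no_cancel hg (by rw [heq]; simpa using h2.2)
      simp only [bwd, dif_neg h, fwd, dif_neg hcond]
      apply Subtype.ext; apply Fin.ext
      simp only []
      omega

noncomputable def sigma (a : α) : Equiv.Perm (Fin (w.toWord.length + 1)) :=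
  (ee w a).extendSubtype

lemma sigma_pos {a : α} {i : ℕ} (h : w.toWord[i]? = some (a, true))
    {j j' : Fin (w.toWord.length + 1)} (hj : (j : ℕ) = i + 1) (hj' : (j' : ℕ) = i) :
    sigma w a j = j' := by
  have hp : pp w a j := Or.inl ⟨by omega, by rw [hj]; simpa using h⟩
  rw [sigma, Equiv.extendSubtype_apply_of_mem _ _ hp]
  show (fwd w a j hp).1 = j'
  have hcond : (j : ℕ) ≠ 0 ∧ w.toWord[(j : ℕ) - 1]? = some (a, true) :=
    ⟨by omega, by rw [hj]; simpa using h⟩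
  rw [fwd, dif_pos hcond]
  apply Fin.ext
  simp only []
  omega

lemma sigma_neg {a : α} {i : ℕ} (h : w.toWord[i]? = some (a, false))
    {j j' : Fin (w.toWord.length + 1)} (hj : (j : ℕ) = i) (hj' : (j' : ℕ) = i + 1) :
    sigma w a j = j' := by
  have hp : pp w a j := Or.inr (by rw [hj]; exact h)
  rw [sigma, Equiv.extendSubtype_apply_of_mem _ _ hp]
  show (fwd w a j hp).1 = j'
  have hcond : ¬ ((j : ℕ) ≠ 0 ∧ w.toWord[(j : ℕ) - 1]? = some (a, true)) := by
    rintro ⟨hne, hg⟩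
    have heq : (j : ℕ) - 1 + 1 = (j : ℕ) := by omega
    exact no_cancel hg (by rw [heq, hj]; simpa using h)
  rw [fwd, dif_neg hcond]
  apply Fin.ext
  simp only []
  omega

lemma eval_aux (t : List (α × Bool)) : ∀ (i : ℕ) (hi : i < w.toWord.length + 1),
    w.toWord.drop i = t →
    (List.prod (t.map fun x => cond x.2 (sigma w x.1) (sigma w x.1)⁻¹))
        ⟨w.toWord.length, Nat.lt_succ_self _⟩ = ⟨i, hi⟩ := by
  induction t with
  | nil =>
    intro i hi ht
    have hlen : i = w.toWord.length := by
      have := congrArg List.length ht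
      simp [List.length_drop] at this
      omega
    simp only [List.map_nil, List.prod_nil, Equiv.Perm.one_apply]
    exact Fin.ext hlen.symm
  | cons x t ih =>
    obtain ⟨a, b⟩ := x
    intro i hi ht
    have hget : w.toWord[i]? = some (a, b) := by
      have h0 : (w.toWord.drop i)[0]? = w.toWord[i + 0]? := List.getElem?_drop
      rw [ht] at h0
      simpa using h0.symm
    have hlen : i < w.toWord.length := (List.getElem?_eq_some_iff.mp hget).1
    have ht' : w.toWord.drop (i + 1) = t := by
      have := congrArg (List.drop 1) ht
      rw [List.drop_drop] at this
      simpa [add_comm] using this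
    have hi' : i + 1 < w.toWord.length + 1 := by omega
    have IH := ih (i + 1) hi' ht'
    simp only [List.map_cons, List.prod_cons, Equiv.Perm.mul_apply, IH]
    cases b
    · show (sigma w a)⁻¹ _ = _
      have : sigma w a ⟨i, hi⟩ = ⟨i + 1, hi'⟩ := sigma_neg w hget rfl rfl
      rw [← this, Equiv.Perm.inv_def, Equiv.symm_apply_apply]
    · show sigma w a _ = _
      exact sigma_pos w hget rfl rfl

lemma exists_perm_hom (w : FreeGroup α) (hw : w ≠ 1) :
    ∃ (m : ℕ) (φ : FreeGroup α →* Equiv.Perm (Fin m)), φ w ≠ 1 := by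
  refine ⟨w.toWord.length + 1, FreeGroup.lift (sigma w), fun hφ => ?_⟩
  have h0 := FreeGroup.lift_mk (L := w.toWord) (f := sigma w)
  rw [FreeGroup.mk_toWord] at h0
  have hprod : List.prod (w.toWord.map fun x => cond x.2 (sigma w x.1) (sigma w x.1)⁻¹) = 1 :=
    h0.symm.trans hφ
  have he := eval_aux w w.toWord 0 (by omega) (by simp)
  rw [hprod] at he
  simp only [Equiv.Perm.one_apply] at he
  have hlen : w.toWord.length = 0 := congrArg Fin.val he
  exact hw (FreeGroup.toWord_eq_nil_iff.mp (List.length_eq_zero_iff.mp hlen))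

end RFAux

namespace RFAux

lemma hopf {n : ℕ} (θ : FreeGroup (Fin n) →* FreeGroup (Fin n)) (hθ : Surjective θ) :
    Injective θ := by
  rw [injective_iff_map_eq_one]
  intro w hw
  by_contra hw1
  obtain ⟨m, φ, hφ⟩ := exists_perm_hom w hw1
  have hfin : Finite (FreeGroup (Fin n) →* Equiv.Perm (Fin m)) :=
    Finite.of_equiv _ FreeGroup.lift
  have hinj : Injective fun ψ : FreeGroup (Fin n) →* Equiv.Perm (Fin m) => ψ.comp θ :=
    fun ψ₁ ψ₂ h => (MonoidHom.cancel_right hθ).mp h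
  obtain ⟨ψ, hψ⟩ := (Finite.injective_iff_surjective.mp hinj) φ
  have : φ w = 1 := by
    rw [← hψ]
    simp [MonoidHom.comp_apply, hw]
  exact hφ this

lemma finite_card_le {n : ℕ} {β : Type} (f : FreeGroup (Fin n) →* FreeGroup β)
    (hf : Surjective f) : ∃ _ : Fintype β, Fintype.card β ≤ n := by
  classical
  let μ : FreeGroup β →* Multiplicative (β →₀ ℤ) :=
    FreeGroup.lift fun b => Multiplicative.ofAdd (Finsupp.single b 1)
  let τ := μ.comp f
  let v : Fin n → (β →₀ ℤ) := fun i => Multiplicative.toAdd (τ (FreeGroup.of i))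
  have hmem : ∀ x : FreeGroup (Fin n),
      Multiplicative.toAdd (τ x) ∈ Submodule.span ℤ (Set.range v) := by
    intro x
    refine FreeGroup.induction_on x ?_ ?_ ?_ ?_
    · simpa using Submodule.zero_mem _
    · intro a; exact Submodule.subset_span ⟨a, rfl⟩
    · intro a ih
      rw [map_inv]
      simpa using neg_mem ih
    · intro x y hx hy
      rw [map_mul]
      simpa using add_mem hx hy
  have hsingle : ∀ b : β, (Finsupp.single b 1 : β →₀ ℤ) ∈ Submodule.span ℤ (Set.range v) := by
    intro b
    obtain ⟨x, hx⟩ := hf (FreeGroup.of b)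
    have : Multiplicative.toAdd (τ x) = Finsupp.single b 1 := by
      simp only [τ, MonoidHom.comp_apply, hx, μ, FreeGroup.lift_apply_of]
      rfl
    rw [← this]
    exact hmem x
  have hspan : Submodule.span ℤ (Set.range v) = ⊤ := by
    rw [eq_top_iff]
    intro g hg
    clear hg
    induction g using Finsupp.induction with
    | zero => exact Submodule.zero_mem _
    | single_add b c g _ _ ih =>
      refine add_mem ?_ ih
      have : (Finsupp.single b c : β →₀ ℤ) = c • Finsupp.single b 1 := by
        rw [Finsupp.smul_single]; simp
      rw [this]
      exact Submodule.smul_mem _ _ (hsingle b)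
  have hrank : Module.rank ℤ (β →₀ ℤ) ≤ (n : Cardinal) := by
    rw [← rank_top ℤ, ← hspan]
    refine (rank_span_le _).trans ?_
    refine Cardinal.mk_range_le.trans ?_
    simp
  rw [rank_finsupp_self'] at hrank
  have hlt : (Cardinal.mk β) < Cardinal.aleph0 := lt_of_le_of_lt hrank (Cardinal.nat_lt_aleph0 n)
  obtain ⟨ft⟩ := Cardinal.lt_aleph0_iff_fintype.mp hlt
  refine ⟨ft, ?_⟩
  rw [Cardinal.mk_fintype] at hrank
  exact_mod_cast hrank

end RFAux

theorem rank_lt_of_proper_retract {n : ℕ} (hn : 2 ≤ n)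
    (R : Subgroup (FreeGroup (Fin n))) (hR : IsRetract R) (hne : R ≠ ⊤) :
    ∃ k < n, HasFreeRank R k := by
  classical
  obtain ⟨r, hrange, hfix⟩ := hR
  have hmemR : ∀ x, r x ∈ R := fun x => hrange ▸ ⟨x, rfl⟩
  have hx : ∃ x, r x ≠ x := by
    by_contra h
    push_neg at h
    exact hne ((Subgroup.eq_top_iff' R).mpr fun y => h y ▸ hmemR y)
  obtain ⟨x₀, hx₀⟩ := hx
  set w := x₀ * (r x₀)⁻¹ with hw
  have hw1 : w ≠ 1 := fun h => hx₀ (mul_inv_eq_one.mp h).symm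
  have hrr : ∀ x, r (r x) = r x := fun x => hfix _ (hmemR x)
  have hwker : r w = 1 := by
    rw [hw, map_mul, map_inv, hrr, mul_inv_cancel]
  haveI : IsFreeGroup ↥R := inferInstance
  let r' : FreeGroup (Fin n) →* ↥R := r.codRestrict R hmemR
  have hr's : Function.Surjective r' := fun y => ⟨↑y, Subtype.ext (hfix _ y.2)⟩
  let π : FreeGroup (Fin n) →* FreeGroup (IsFreeGroup.Generators ↥R) :=
    (IsFreeGroup.toFreeGroup ↥R).toMonoidHom.comp r'
  have hπs : Function.Surjective π := (IsFreeGroup.toFreeGroup ↥R).surjective.comp hr's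
  have hπw : π w = 1 := by
    have h1 : r' w = 1 := Subtype.ext (by simpa [r'] using hwker)
    simp [π, MonoidHom.comp_apply, h1]
  obtain ⟨ft, hcard⟩ := RFAux.finite_card_le π hπs
  letI := ft
  set k := Fintype.card (IsFreeGroup.Generators ↥R) with hk
  have hkn : k ≠ n := by
    intro hkeq
    let e : IsFreeGroup.Generators ↥R ≃ Fin n :=
      (Fintype.equivFin _).trans (finCongr hkeq)
    let θ : FreeGroup (Fin n) →* FreeGroup (Fin n) :=
      (FreeGroup.freeGroupCongr e).toMonoidHom.comp π
    have hθs : Function.Surjective θ := (FreeGroup.freeGroupCongr e).surjective.comp hπs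
    have hθw : θ w = 1 := by simp [θ, MonoidHom.comp_apply, hπw]
    exact hw1 ((injective_iff_map_eq_one θ).mp (RFAux.hopf θ hθs) w hθw)
  have hcard' : k ≤ n := hcard
  refine ⟨k, lt_of_le_of_ne hcard' hkn, ?_⟩
  let e : Fin k ≃ IsFreeGroup.Generators ↥R := (Fintype.equivFin _).symm
  let ψ : FreeGroup (Fin k) ≃* ↥R :=
    (FreeGroup.freeGroupCongr e).trans (IsFreeGroup.mulEquiv ↥R)
  refine ⟨R.subtype.comp ψ.toMonoidHom, ?_, ?_⟩
  · exact R.subtype_injective.comp ψ.injective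
  · ext y
    simp only [MonoidHom.mem_range, MonoidHom.comp_apply]
    constructor
    · rintro ⟨x, rfl⟩
      exact (ψ x).2
    · intro hy
      exact ⟨ψ.symm ⟨y, hy⟩, by simp⟩
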